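/- arXiv:2009.01678 — 4 statements merged into one kernel-verified Lean document; each statement's English description precedes it below -/
import Mathlib

section
/- Let S ∈ S^{K^p}_+ be a positive semidefinite matrix and define H(q) = S · q^{⊗p} for q ∈ S^K_+ (entrywise inner product). Then the differential DH(q) of H at each q ∈ S^K_+ is a positive semidefinite symmetric matrix; equivalently, a · DH(q) ≥ 0 for every positive semidefinite symmetric a. -/
open Finset Matrix


/-- Let `S` be a positive semidefinite `K^p × K^p` matrix and
`H(q) = S · q^{⊗p}`. Then the differential of `H` at every positive semidefinite `q`
is positive semidefinite, i.e. every directional derivative of `H` at `q` in a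
positive semidefinite direction `a` is nonnegative. -/
theorem stmt3 (K p : ℕ) (hp : 1 ≤ p)
    (S : Matrix (Fin p → Fin K) (Fin p → Fin K) ℝ) (hS : S.PosSemidef)
    (H : Matrix (Fin K) (Fin K) ℝ → ℝ)
    (hH : ∀ q : Matrix (Fin K) (Fin K) ℝ,
      H q = ∑ i : Fin p → Fin K, ∑ j : Fin p → Fin K, S i j * ∏ n, q (i n) (j n)) :
    ∀ q : Matrix (Fin K) (Fin K) ℝ, q.PosSemidef →
      ∀ a : Matrix (Fin K) (Fin K) ℝ, a.PosSemidef →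
        ∀ d : ℝ, HasDerivAt (fun s : ℝ => H (q + s • a)) d 0 → 0 ≤ d := by
  intro q hq a ha d hd
  classical
  set D : ℝ := ∑ i : Fin p → Fin K, ∑ j : Fin p → Fin K,
      S i j * ∑ m : Fin p, (∏ n ∈ Finset.univ.erase m, q (i n) (j n)) * a (i m) (j m) with hDdef
  -- explicit derivative
  have hD : HasDerivAt (fun s : ℝ => H (q + s • a)) D 0 := by
    have hfun : (fun s : ℝ => H (q + s • a)) =
        fun s : ℝ => ∑ i : Fin p → Fin K, ∑ j : Fin p → Fin K,
          S i j * ∏ n, (q (i n) (j n) + s * a (i n) (j n)) := by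
      funext s
      simp [hH, Matrix.add_apply, Matrix.smul_apply, smul_eq_mul]
    rw [hfun, hDdef]
    apply HasDerivAt.fun_sum
    intro i _
    apply HasDerivAt.fun_sum
    intro j _
    apply HasDerivAt.const_mul
    have h := HasDerivAt.fun_finsetProd (u := (Finset.univ : Finset (Fin p)))
      (f := fun n (s : ℝ) => q (i n) (j n) + s * a (i n) (j n))
      (f' := fun n => a (i n) (j n)) (x := (0 : ℝ))
      (fun n _ => by
        simpa using (((hasDerivAt_id (0:ℝ)).mul_const (a (i n) (j n))).const_add
          (q (i n) (j n))))
    simpa [smul_eq_mul, mul_comm] using h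
  have hdD : d = D := hd.unique hD
  rw [hdD, hDdef]
  -- decompose a and q
  obtain ⟨A, hA⟩ : ∃ A : Matrix (Fin K) (Fin K) ℝ, a = Aᴴ * A := by
    open scoped MatrixOrder in exact CStarAlgebra.nonneg_iff_eq_star_mul_self.mp ha.nonneg
  obtain ⟨Q, hQ⟩ : ∃ Q : Matrix (Fin K) (Fin K) ℝ, q = Qᴴ * Q := by
    open scoped MatrixOrder in exact CStarAlgebra.nonneg_iff_eq_star_mul_self.mp hq.nonneg
  have ha' : ∀ x y, a x y = ∑ k, A k x * A k y := by
    intro x y; rw [hA]; simp [Matrix.mul_apply, Matrix.conjTranspose_apply]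
  have hq' : ∀ x y, q x y = ∑ k, Q k x * Q k y := by
    intro x y; rw [hQ]; simp [Matrix.mul_apply, Matrix.conjTranspose_apply]
  -- reorganize: D = ∑ m, ∑ κ, (v m κ)ᵀ S (v m κ)
  have key : ∀ m : Fin p, ∀ i j : Fin p → Fin K,
      (∏ n ∈ Finset.univ.erase m, q (i n) (j n)) * a (i m) (j m)
        = ∑ κ : Fin p → Fin K,
            (∏ n, (if n = m then A else Q) (κ n) (i n)) *
            (∏ n, (if n = m then A else Q) (κ n) (j n)) := by
    intro m i j
    have h1 : (∏ n ∈ Finset.univ.erase m, q (i n) (j n)) * a (i m) (j m)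
        = ∏ n, ∑ k, (if n = m then A else Q) k (i n) * (if n = m then A else Q) k (j n) := by
      rw [← Finset.prod_erase_mul (Finset.univ) _ (Finset.mem_univ m)]
      congr 1
      · apply Finset.prod_congr rfl
        intro n hn
        have : n ≠ m := (Finset.mem_erase.mp hn).1
        simp [this, hq']
      · simp [ha']
    rw [h1, Finset.prod_univ_sum]
    rw [show (Fintype.piFinset fun _ : Fin p => (Finset.univ : Finset (Fin K)))
        = Finset.univ from Fintype.piFinset_univ]
    apply Finset.sum_congr rfl
    intro κ _
    rw [Finset.prod_mul_distrib]
  set v : Fin p → (Fin p → Fin K) → (Fin p → Fin K) → ℝ :=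
    fun m κ i => ∏ n, (if n = m then A else Q) (κ n) (i n) with hv
  have quad : ∀ m κ, (0:ℝ) ≤ ∑ i, ∑ j, S i j * (v m κ i * v m κ j) := by
    intro m κ
    have h := hS.dotProduct_mulVec_nonneg (v m κ)
    have e : (star (v m κ)) ⬝ᵥ (S *ᵥ (v m κ)) = ∑ i, ∑ j, S i j * (v m κ i * v m κ j) := by
      simp only [dotProduct, Matrix.mulVec, dotProduct, Finset.mul_sum,
        Pi.star_apply, star_trivial]
      apply Finset.sum_congr rfl
      intro i _
      apply Finset.sum_congr rfl
      intro j _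
      ring
    rw [e] at h
    exact h
  have e1 : (∑ i : Fin p → Fin K, ∑ j : Fin p → Fin K,
      S i j * ∑ m : Fin p, (∏ n ∈ Finset.univ.erase m, q (i n) (j n)) * a (i m) (j m))
      = ∑ m : Fin p, ∑ κ : Fin p → Fin K, ∑ i : Fin p → Fin K, ∑ j : Fin p → Fin K,
          S i j * (v m κ i * v m κ j) := by
    have e0 : (∑ i : Fin p → Fin K, ∑ j : Fin p → Fin K,
        S i j * ∑ m : Fin p, (∏ n ∈ Finset.univ.erase m, q (i n) (j n)) * a (i m) (j m))
        = ∑ i : Fin p → Fin K, ∑ j : Fin p → Fin K, ∑ m : Fin p, ∑ κ : Fin p → Fin K,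
            S i j * (v m κ i * v m κ j) := by
      apply Finset.sum_congr rfl; intro i _
      apply Finset.sum_congr rfl; intro j _
      rw [Finset.mul_sum]
      apply Finset.sum_congr rfl; intro m _
      rw [key m i j, Finset.mul_sum]
    rw [e0]
    calc ∑ i : Fin p → Fin K, ∑ j : Fin p → Fin K, ∑ m : Fin p, ∑ κ : Fin p → Fin K,
            S i j * (v m κ i * v m κ j)
        = ∑ i : Fin p → Fin K, ∑ m : Fin p, ∑ j : Fin p → Fin K, ∑ κ : Fin p → Fin K,
            S i j * (v m κ i * v m κ j) :=
          Finset.sum_congr rfl (fun i _ => Finset.sum_comm)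
      _ = ∑ m : Fin p, ∑ i : Fin p → Fin K, ∑ j : Fin p → Fin K, ∑ κ : Fin p → Fin K,
            S i j * (v m κ i * v m κ j) := Finset.sum_comm
      _ = ∑ m : Fin p, ∑ i : Fin p → Fin K, ∑ κ : Fin p → Fin K, ∑ j : Fin p → Fin K,
            S i j * (v m κ i * v m κ j) :=
          Finset.sum_congr rfl (fun m _ => Finset.sum_congr rfl
            (fun i _ => Finset.sum_comm))
      _ = ∑ m : Fin p, ∑ κ : Fin p → Fin K, ∑ i : Fin p → Fin K, ∑ j : Fin p → Fin K,
            S i j * (v m κ i * v m κ j) :=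
          Finset.sum_congr rfl (fun m _ => Finset.sum_comm)
  rw [e1]
  apply Finset.sum_nonneg; intro m _
  apply Finset.sum_nonneg; intro κ _
  exact quad m κ
end

section
/- For q ∈ S^K_+ define H(q) = Σ_{j,j'=1}^K (q_{j,j'})^p. If p = 1 or p is even, then H is convex on S^K_+. Moreover, for a ∈ S^K and q ∈ S^K_+, the second directional derivative equals p(p-1) (a∘a)·(q∘···∘q) (p−2 Hadamard factors), which is nonnegative when p=1 or p is even. -/
open Finset

lemma psd_convex (K : ℕ) : Convex ℝ {q : Matrix (Fin K) (Fin K) ℝ | q.PosSemidef} := by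
  intro x hx y hy a b ha hb hab
  refine Matrix.PosSemidef.of_dotProduct_mulVec_nonneg ?_ ?_
  · unfold Matrix.IsHermitian
    have h1 := hx.1
    have h2 := hy.1
    ext i j
    simp [Matrix.conjTranspose, Matrix.transpose_apply, Matrix.map_apply]
    have e1 : x j i = x i j := by
      have := congrFun (congrFun h1 i) j
      simpa [Matrix.conjTranspose_apply] using this
    have e2 : y j i = y i j := by
      have := congrFun (congrFun h2 i) j
      simpa [Matrix.conjTranspose_apply] using this
    simp [e1, e2]
  · intro v
    have h1 := Matrix.PosSemidef.dotProduct_mulVec_nonneg hx v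
    have h2 := Matrix.PosSemidef.dotProduct_mulVec_nonneg hy v
    simp only [Matrix.add_mulVec, Matrix.smul_mulVec, dotProduct_add,
      dotProduct_smul] at *
    exact add_nonneg (smul_nonneg ha h1) (smul_nonneg hb h2)

lemma second_deriv_term (p : ℕ) (x c : ℝ) :
    HasDerivAt (fun s : ℝ => (p : ℝ) * (x + s * c) ^ (p - 1) * c)
      ((p : ℝ) * (((p - 1 : ℕ) : ℝ) * x ^ (p - 1 - 1) * c) * c) 0 := by
  have h1 : HasDerivAt (fun s : ℝ => x + s * c) c 0 := by
    simpa using ((hasDerivAt_id (0:ℝ)).mul_const c).const_add x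
  have h2 := (h1.pow (p - 1)).const_mul (p : ℝ)
  simpa [mul_comm, mul_assoc, mul_left_comm] using h2.mul_const c

/-- For `H(q) = Σ_{j,j'} (q_{jj'})^p` with `p = 1` or `p` even, `H` is convex on the
positive semidefinite cone; moreover for symmetric `a` and positive semidefinite `q`
the second directional derivative of `H` at `q` along `a` equals
`p(p-1) Σ_{j,j'} (a_{jj'})² (q_{jj'})^{p-2}`, which is nonnegative. -/
theorem stmt4 (K p : ℕ) (hp : p = 1 ∨ Even p)
    (H : Matrix (Fin K) (Fin K) ℝ → ℝ)
    (hH : ∀ q : Matrix (Fin K) (Fin K) ℝ,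
      H q = ∑ j : Fin K, ∑ j' : Fin K, (q j j') ^ p) :
    ConvexOn ℝ {q : Matrix (Fin K) (Fin K) ℝ | q.PosSemidef} H ∧
    ∀ a q : Matrix (Fin K) (Fin K) ℝ, a.IsSymm → q.PosSemidef →
      (iteratedDeriv 2 (fun s : ℝ => H (q + s • a)) 0 =
        ((p * (p - 1) : ℕ) : ℝ) *
          ∑ j : Fin K, ∑ j' : Fin K, (a j j') ^ 2 * (q j j') ^ (p - 2)) ∧
      0 ≤ ((p * (p - 1) : ℕ) : ℝ) *
          ∑ j : Fin K, ∑ j' : Fin K, (a j j') ^ 2 * (q j j') ^ (p - 2) := by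
  have hφ : ConvexOn ℝ Set.univ (fun t : ℝ => t ^ p) := by
    rcases hp with rfl | hp
    · simp only [pow_one]; exact convexOn_id (convex_univ : Convex ℝ (Set.univ : Set ℝ))
    · exact hp.convexOn_pow
  have heven : Even (p - 2) := by
    rcases hp with rfl | hp
    · simp
    · exact Even.tsub hp (by norm_num)
  constructor
  · refine ⟨psd_convex K, ?_⟩
    intro x hx y hy a b ha hb hab
    simp only [hH]
    calc ∑ j : Fin K, ∑ j' : Fin K, ((a • x + b • y) j j') ^ p
        ≤ ∑ j : Fin K, ∑ j' : Fin K, (a * (x j j') ^ p + b * (y j j') ^ p) := by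
          refine Finset.sum_le_sum fun j _ => Finset.sum_le_sum fun j' _ => ?_
          have := hφ.2 (Set.mem_univ (x j j')) (Set.mem_univ (y j j')) ha hb hab
          simpa [Matrix.add_apply, Matrix.smul_apply, smul_eq_mul] using this
      _ = a * (∑ j : Fin K, ∑ j' : Fin K, (x j j') ^ p)
            + b * (∑ j : Fin K, ∑ j' : Fin K, (y j j') ^ p) := by
          simp [Finset.sum_add_distrib, Finset.mul_sum]
  · intro a q _ _
    have key : ∀ s₀ : ℝ, ∀ x c : ℝ, HasDerivAt (fun s : ℝ => (x + s * c) ^ p)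
        ((p : ℝ) * (x + s₀ * c) ^ (p - 1) * c) s₀ := by
      intro s₀ x c
      have h1 : HasDerivAt (fun s : ℝ => x + s * c) c s₀ := by
        simpa using ((hasDerivAt_id s₀).mul_const c).const_add x
      exact h1.pow p
    have hfun : (fun s : ℝ => H (q + s • a)) =
        fun s => ∑ j : Fin K, ∑ j' : Fin K, (q j j' + s * a j j') ^ p := by
      funext s
      simp [hH, Matrix.add_apply, Matrix.smul_apply, smul_eq_mul]
    have hd1 : deriv (fun s : ℝ => H (q + s • a)) =
        fun s => ∑ j : Fin K, ∑ j' : Fin K,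
          (p : ℝ) * (q j j' + s * a j j') ^ (p - 1) * a j j' := by
      funext s
      rw [hfun]
      exact (HasDerivAt.fun_sum fun j _ => HasDerivAt.fun_sum fun j' _ =>
        key s (q j j') (a j j')).deriv
    have hd2 : deriv (deriv (fun s : ℝ => H (q + s • a))) 0 =
        ∑ j : Fin K, ∑ j' : Fin K,
          (p : ℝ) * (((p - 1 : ℕ) : ℝ) * (q j j') ^ (p - 1 - 1) * a j j') * a j j' := by
      rw [hd1]
      exact (HasDerivAt.fun_sum fun j _ => HasDerivAt.fun_sum fun j' _ =>
        second_deriv_term p (q j j') (a j j')).deriv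
    constructor
    · rw [show (2 : ℕ) = 1 + 1 from rfl, iteratedDeriv_succ, iteratedDeriv_one, hd2,
        Finset.mul_sum]
      refine Finset.sum_congr rfl fun j _ => ?_
      rw [Finset.mul_sum]
      refine Finset.sum_congr rfl fun j' _ => ?_
      have : p - 1 - 1 = p - 2 := by omega
      rw [this]
      push_cast
      ring
    · refine mul_nonneg (by positivity) (Finset.sum_nonneg fun j _ =>
        Finset.sum_nonneg fun j' _ => mul_nonneg (sq_nonneg _) (heven.pow_nonneg _))
end

section
/- Let ψ: S^K_+ → R be convex, Lipschitz, and nondecreasing, and let H: S^K_+ → R be continuous. Define f(t,x) = sup_{z∈S^K_+} inf_{y∈S^K_+} { z·(x−y) + ψ(y) + t H(z) } for (t,x) ∈ [0,∞) × S^K_+. Then f(0,·) = ψ; that is, for every x ∈ S^K_+, sup_{z∈S^K_+} inf_{y∈S^K_+} { z·(x−y) + ψ(y) } = ψ(x). -/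
/-- The Frobenius norm of a matrix. -/
noncomputable def frob {K : ℕ} (a : Matrix (Fin K) (Fin K) ℝ) : ℝ :=
  Real.sqrt (∑ i, ∑ j, (a i j) ^ 2)

attribute [local instance] Matrix.frobeniusNormedAddCommGroup Matrix.frobeniusNormedSpace

namespace Hopf10

variable {K : ℕ}

open Matrix in
abbrev B (K : ℕ) := Matrix (Fin K) (Fin K) ℝ

lemma frob_nonneg (a : B K) : 0 ≤ frob a := Real.sqrt_nonneg _

lemma frob_eq_norm (a : B K) : frob a = ‖a‖ := by
  rw [Matrix.frobenius_norm_def, frob, Real.sqrt_eq_rpow]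
  norm_num [Real.norm_eq_abs, sq_abs]

lemma frob_zero : frob (0 : B K) = 0 := by simp [frob]

lemma trace_formula (z m : B K) : (z * m).trace = ∑ i, ∑ j, z i j * m j i := by
  simp [Matrix.trace, Matrix.diag, Matrix.mul_apply]

lemma psd_smul {c : ℝ} (hc : 0 ≤ c) {A : B K} (hA : A.PosSemidef) : (c • A).PosSemidef := by
  refine Matrix.PosSemidef.of_dotProduct_mulVec_nonneg ?_ fun v => ?_
  · unfold Matrix.IsHermitian
    rw [Matrix.conjTranspose_smul, hA.1]
    simp
  · rw [Matrix.smul_mulVec, dotProduct_smul, smul_eq_mul]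
    exact mul_nonneg hc (hA.dotProduct_mulVec_nonneg v)

open Matrix

lemma quadform_le (m : B K) (v : Fin K → ℝ) :
    v ⬝ᵥ (m *ᵥ v) ≤ frob m * (∑ i, v i ^ 2) := by
  have h1 : v ⬝ᵥ (m *ᵥ v) = ∑ p : Fin K × Fin K, m p.1 p.2 * (v p.1 * v p.2) := by
    rw [Fintype.sum_prod_type]
    simp [dotProduct, Matrix.mulVec, Finset.mul_sum]
    exact Finset.sum_congr rfl fun i _ => Finset.sum_congr rfl fun j _ => by ring
  have h2 := Finset.sum_mul_sq_le_sq_mul_sq Finset.univ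
    (fun p : Fin K × Fin K => m p.1 p.2) (fun p : Fin K × Fin K => v p.1 * v p.2)
  have h3 : ∑ p : Fin K × Fin K, (v p.1 * v p.2) ^ 2 = (∑ i, v i ^ 2) ^ 2 := by
    rw [Fintype.sum_prod_type, sq (∑ i, v i ^ 2), Finset.sum_mul_sum]
    exact Finset.sum_congr rfl fun i _ => Finset.sum_congr rfl fun j _ => by ring
  have h4 : 0 ≤ ∑ i, v i ^ 2 := Finset.sum_nonneg fun i _ => sq_nonneg _
  have h5 : v ⬝ᵥ (m *ᵥ v) ≤ |v ⬝ᵥ (m *ᵥ v)| := le_abs_self _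
  refine h5.trans ?_
  have h6 : |v ⬝ᵥ (m *ᵥ v)| ^ 2 ≤ (frob m * (∑ i, v i ^ 2)) ^ 2 := by
    rw [sq_abs, h1, mul_pow]
    refine h2.trans (le_of_eq ?_)
    rw [h3, frob]
    rw [Real.sq_sqrt (by positivity)]
    congr 1
    rw [Fintype.sum_prod_type]
  have h7 : 0 ≤ frob m * (∑ i, v i ^ 2) := mul_nonneg (frob_nonneg m) h4
  exact abs_le_of_sq_le_sq (by rwa [sq_abs] at h6) h7



lemma herm_transpose {A : B K} (h : A.IsHermitian) : Aᵀ = A := by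
  rw [← Matrix.conjTranspose_eq_transpose_of_trivial]; exact h

lemma smul_one_sub_psd {m : B K} (hm : m.IsHermitian) :
    (frob m • (1 : B K) - m).PosSemidef := by
  refine Matrix.PosSemidef.of_dotProduct_mulVec_nonneg ?_ fun v => ?_
  · unfold Matrix.IsHermitian
    rw [Matrix.conjTranspose_sub, Matrix.conjTranspose_smul, hm]
    simp
  · have h1 : star v = v := by simp
    rw [h1, Matrix.sub_mulVec, dotProduct_sub, Matrix.smul_mulVec,
      Matrix.one_mulVec, dotProduct_smul, smul_eq_mul]
    have h2 := quadform_le m v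
    have h3 : v ⬝ᵥ v = ∑ i, v i ^ 2 := by
      simp [dotProduct, sq]
    rw [h3]
    linarith

lemma frob_smul_one {c : ℝ} (hc : 0 ≤ c) : frob (c • (1 : B K)) = c * Real.sqrt K := by
  have : ∀ i j : Fin K, ((c • (1 : B K)) i j) ^ 2 = if i = j then c ^ 2 else 0 := by
    intro i j
    by_cases h : i = j <;> simp [h, Matrix.one_apply]
  rw [frob]
  simp only [this, Finset.sum_ite_eq, Finset.mem_univ, if_true]
  simp only [Finset.sum_const, Finset.card_univ, Fintype.card_fin, nsmul_eq_mul]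
  rw [mul_comm, Real.sqrt_mul (by positivity), Real.sqrt_sq hc, mul_comm]

lemma vecMulVec_psd (v : Fin K → ℝ) : (Matrix.vecMulVec v v).PosSemidef := by
  refine Matrix.PosSemidef.of_dotProduct_mulVec_nonneg ?_ fun w => ?_
  · unfold Matrix.IsHermitian
    ext i j
    simp [Matrix.vecMulVec_apply, mul_comm]
  · have h1 : star w = w := by simp
    rw [h1]
    have : w ⬝ᵥ (Matrix.vecMulVec v v *ᵥ w) = (∑ i, v i * w i) ^ 2 := by
      rw [sq, Finset.sum_mul_sum]
      simp [dotProduct, Matrix.mulVec, Matrix.vecMulVec_apply, Finset.mul_sum]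
      exact Finset.sum_congr rfl fun i _ => Finset.sum_congr rfl fun j _ => by ring
    rw [this]
    exact sq_nonneg _

lemma quad_eq_trace (z : B K) (v : Fin K → ℝ) :
    v ⬝ᵥ (z *ᵥ v) = (z * Matrix.vecMulVec v v).trace := by
  rw [trace_formula]
  simp [dotProduct, Matrix.mulVec, Matrix.vecMulVec_apply, Finset.mul_sum]
  exact Finset.sum_congr rfl fun i _ => Finset.sum_congr rfl fun j _ => by ring


lemma key (K : ℕ) (ψ : B K → ℝ) (L : ℝ)
    (hψconv : ConvexOn ℝ {x : B K | x.PosSemidef} ψ)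
    (hψlip : ∀ x y : B K, x.PosSemidef → y.PosSemidef → |ψ x - ψ y| ≤ L * frob (x - y))
    (hψmono : ∀ a b : B K, a.PosSemidef → b.PosSemidef → (a - b).PosSemidef → ψ b ≤ ψ a)
    (x : B K) (hx : x.PosSemidef) (ε : ℝ) (hε : 0 < ε) :
    ∃ z : B K, z.PosSemidef ∧ ∀ y : B K, y.PosSemidef →
      ψ x - ε ≤ (z * (x - y)).trace + ψ y := by
  classical
  set L' := max L 0 with hL'
  have hL'0 : 0 ≤ L' := le_max_right _ _
  have hLL' : L ≤ L' := le_max_left _ _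
  set c : ℝ := L' * Real.sqrt K with hcdef
  have hc : 0 ≤ c := mul_nonneg hL'0 (Real.sqrt_nonneg _)
  set E : Set (B K × ℝ) :=
    {p | ∃ y s : B K, y.PosSemidef ∧ s.PosSemidef ∧ p.1 = y - s ∧ ψ y ≤ p.2} with hEdef
  -- E is convex
  have hEconv : Convex ℝ E := by
    rintro ⟨w₁, t₁⟩ ⟨y₁, s₁, hy₁, hs₁, rfl, ht₁⟩ ⟨w₂, t₂⟩ ⟨y₂, s₂, hy₂, hs₂, rfl, ht₂⟩
      a b ha hb hab
    refine ⟨a • y₁ + b • y₂, a • s₁ + b • s₂,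
      (psd_smul ha hy₁).add (psd_smul hb hy₂),
      (psd_smul ha hs₁).add (psd_smul hb hs₂), ?_, ?_⟩
    · show a • (y₁ - s₁) + b • (y₂ - s₂) = _
      module
    · show ψ _ ≤ a * t₁ + b * t₂
      have := hψconv.2 hy₁ hy₂ ha hb hab
      have h2 : a * ψ y₁ + b * ψ y₂ ≤ a * t₁ + b * t₂ := by
        have := mul_le_mul_of_nonneg_left ht₁ ha
        have := mul_le_mul_of_nonneg_left ht₂ hb
        linarith
      calc ψ (a • y₁ + b • y₂) ≤ a • ψ y₁ + b • ψ y₂ := this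
        _ ≤ a * t₁ + b * t₂ := by simpa [smul_eq_mul] using h2
  -- lower bound on E
  have hEC : ∀ p ∈ E, ψ x - c * frob (x - p.1) ≤ p.2 := by
    rintro ⟨w, t⟩ ⟨y, s, hy, hs, rfl, ht⟩
    dsimp only at *
    set δ : ℝ := frob (x - (y - s)) with hδdef
    have hδ0 : 0 ≤ δ := frob_nonneg _
    have hxy : (x - (y - s)).IsHermitian := hx.1.sub (hy.1.sub hs.1)
    have h1 : (δ • (1 : B K) - (x - (y - s))).PosSemidef := smul_one_sub_psd hxy
    have hy1 : (y + δ • (1 : B K)).PosSemidef := hy.add (psd_smul hδ0 Matrix.PosSemidef.one)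
    have h2 : (y + δ • (1 : B K) - x).PosSemidef := by
      have := hs.add h1
      have heq : s + (δ • (1 : B K) - (x - (y - s))) = y + δ • (1 : B K) - x := by module
      rwa [heq] at this
    have h3 : ψ x ≤ ψ (y + δ • (1 : B K)) := hψmono _ _ hy1 hx h2
    have h4 : |ψ (y + δ • (1 : B K)) - ψ y| ≤ L * frob (δ • (1 : B K)) := by
      have := hψlip (y + δ • (1 : B K)) y hy1 hy
      simpa using this
    have h5 : frob (δ • (1 : B K)) = δ * Real.sqrt K := frob_smul_one hδ0
    have h6 : L * (δ * Real.sqrt K) ≤ L' * (δ * Real.sqrt K) :=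
      mul_le_mul_of_nonneg_right hLL' (by positivity)
    have h7 : ψ (y + δ • (1 : B K)) - ψ y ≤ L' * (δ * Real.sqrt K) := by
      have := (le_abs_self (ψ (y + δ • (1 : B K)) - ψ y)).trans h4
      rw [h5] at this
      linarith
    have : c * frob (x - (y - s)) = L' * (δ * Real.sqrt K) := by
      rw [hcdef, ← hδdef]; ring
    rw [this]
    linarith
  -- point not in closure
  set C : Set (B K × ℝ) := {p | ψ x - c * ‖x - p.1‖ ≤ p.2} with hCdef
  have hCclosed : IsClosed C := by
    apply isClosed_le
    · exact (continuous_const.sub (continuous_const.mul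
        ((continuous_const.sub continuous_fst).norm)))
    · exact continuous_snd
  have hEC' : E ⊆ C := by
    intro p hp
    have := hEC p hp
    rwa [hCdef, Set.mem_setOf_eq, ← frob_eq_norm]
  have hclosureC : closure E ⊆ C := closure_minimal hEC' hCclosed
  have hpt : ((x, ψ x - ε) : B K × ℝ) ∉ closure E := by
    intro h
    have := hclosureC h
    rw [hCdef, Set.mem_setOf_eq] at this
    simp only [sub_self, norm_zero, mul_zero, sub_zero] at this
    linarith
  haveI : LocallyConvexSpace ℝ (B K × ℝ) := NormedSpace.toLocallyConvexSpace
  obtain ⟨f, u, hfa, hfx⟩ :=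
    geometric_hahn_banach_closed_point (hEconv.closure) isClosed_closure hpt
  have hfE : ∀ p ∈ E, f p < u := fun p hp => hfa p (subset_closure hp)
  set φ : B K →L[ℝ] ℝ := f.comp (ContinuousLinearMap.inl ℝ (B K) ℝ) with hφdef
  set β : ℝ := f (0, 1) with hβdef
  have hsplit : ∀ (w : B K) (t : ℝ), f (w, t) = φ w + t * β := by
    intro w t
    have : ((w, t) : B K × ℝ) = (w, 0) + t • ((0 : B K), (1 : ℝ)) := by
      simp [Prod.ext_iff]
    rw [this, map_add, f.map_smul, smul_eq_mul]
    rfl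
  have hyst : ∀ y s : B K, y.PosSemidef → s.PosSemidef → ∀ t : ℝ, ψ y ≤ t →
      φ (y - s) + t * β < u := by
    intro y s hy hs t ht
    have : ((y - s, t) : B K × ℝ) ∈ E := ⟨y, s, hy, hs, rfl, ht⟩
    have := hfE _ this
    rwa [hsplit] at this
  have hux : u < φ x + (ψ x - ε) * β := by rw [← hsplit]; exact hfx
  -- β < 0
  have hβneg : β < 0 := by
    rcases lt_trichotomy β 0 with h | h | h
    · exact h
    · exfalso
      have h1 : φ (x - 0) + ψ x * β < u := hyst x 0 hx Matrix.PosSemidef.zero (ψ x) le_rfl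
      rw [h] at h1 hux
      simp at h1 hux
      linarith
    · exfalso
      set t : ℝ := max (ψ x) ((u - φ x) / β) with htdef
      have h1 : φ (x - 0) + t * β < u := hyst x 0 hx Matrix.PosSemidef.zero t (le_max_left _ _)
      rw [sub_zero] at h1
      have h2 : (u - φ x) / β ≤ t := le_max_right _ _
      have h3 : u - φ x ≤ t * β := by
        rw [div_le_iff₀ h] at h2
        linarith
      linarith
  set γ : ℝ := -β with hγdef
  have hγ : 0 < γ := by rw [hγdef]; linarith
  -- φ nonnegative on PSD
  have hφpsd : ∀ s : B K, s.PosSemidef → 0 ≤ φ s := by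
    intro s hs
    by_contra hneg
    push_neg at hneg
    obtain ⟨n, hn⟩ := exists_nat_gt ((u - ψ (0 : B K) * β) / (-φ s))
    have hns : ((n : ℝ) • s).PosSemidef := psd_smul (Nat.cast_nonneg n) hs
    have h1 : φ ((0 : B K) - (n : ℝ) • s) + ψ (0 : B K) * β < u :=
      hyst 0 ((n : ℝ) • s) Matrix.PosSemidef.zero hns (ψ 0) le_rfl
    rw [zero_sub, map_neg, φ.map_smul, smul_eq_mul] at h1
    have h2 : u - ψ (0 : B K) * β < (n : ℝ) * (-φ s) := by
      rw [div_lt_iff₀ (by linarith)] at hn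
      linarith
    linarith
  -- the representing matrix
  set z₀ : B K := Matrix.of (fun i j => φ (Matrix.single j i 1)) with hz₀def
  have hrep : ∀ m : B K, (z₀ * m).trace = φ m := by
    intro m
    rw [trace_formula]
    conv_rhs => rw [Matrix.matrix_eq_sum_single m]
    rw [map_sum]
    rw [Finset.sum_comm]
    refine Finset.sum_congr rfl fun i _ => ?_
    rw [map_sum]
    refine Finset.sum_congr rfl fun j _ => ?_
    have h : Matrix.single i j (m i j) = (m i j) • Matrix.single i j 1 := by
      rw [Matrix.smul_single, smul_eq_mul, mul_one]
    rw [h, φ.map_smul, smul_eq_mul]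
    show φ (Matrix.single i j 1) * m i j = _
    ring
  set z : B K := (1 / (2 * γ)) • (z₀ + z₀ᵀ) with hzdef
  have hq : ∀ m : B K, mᵀ = m → (z * m).trace = φ m / γ := by
    intro m hm
    rw [hzdef, Matrix.smul_mul, Matrix.trace_smul, Matrix.add_mul, Matrix.trace_add]
    have h1 : (z₀ᵀ * m).trace = (z₀ * m).trace := by
      rw [← hm, Matrix.trace_transpose_mul, hm]
    rw [h1, hrep, smul_eq_mul]
    field_simp
    ring
  have hzpsd : z.PosSemidef := by
    refine Matrix.PosSemidef.of_dotProduct_mulVec_nonneg ?_ fun v => ?_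
    · unfold Matrix.IsHermitian
      rw [Matrix.conjTranspose_eq_transpose_of_trivial, hzdef, Matrix.transpose_smul,
        Matrix.transpose_add, Matrix.transpose_transpose, add_comm]
    · have h1 : star v = v := by simp
      rw [h1, quad_eq_trace]
      have hsym : (Matrix.vecMulVec v v)ᵀ = Matrix.vecMulVec v v :=
        herm_transpose (vecMulVec_psd v).1
      rw [hq _ hsym]
      exact div_nonneg (hφpsd _ (vecMulVec_psd v)) hγ.le
  refine ⟨z, hzpsd, fun y hy => ?_⟩
  have h1 : φ (y - 0) + ψ y * β < u := hyst y 0 hy Matrix.PosSemidef.zero (ψ y) le_rfl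
  rw [sub_zero] at h1
  have h2 : φ y - γ * ψ y < φ x - γ * (ψ x - ε) := by
    have hβγ : β = -γ := by rw [hγdef]; ring
    rw [hβγ] at h1 hux
    linarith
  have hxysym : (x - y)ᵀ = x - y := by
    rw [Matrix.transpose_sub, herm_transpose hx.1, herm_transpose hy.1]
  have h3 : (z * (x - y)).trace = (φ x - φ y) / γ := by
    rw [hq _ hxysym, map_sub]
  rw [h3]
  have h4 : (ψ x - ε - ψ y) * γ ≤ φ x - φ y := by nlinarith
  have h5 : ψ x - ε - ψ y ≤ (φ x - φ y) / γ := (le_div_iff₀ hγ).2 h4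
  linarith


end Hopf10

/-- For `ψ : S^K_+ → ℝ` convex, Lipschitz and nondecreasing and `H` continuous, the
Hopf formula `f(t,x) = sup_z inf_y { z·(x−y) + ψ(y) + tH(z) }` satisfies the initial
condition `f(0,·) = ψ`, i.e. `sup_z inf_y { z·(x−y) + ψ(y) } = ψ(x)` on the cone. -/
theorem stmt10 (K : ℕ) (ψ : Matrix (Fin K) (Fin K) ℝ → ℝ) (L : ℝ)
    (hψconv : ConvexOn ℝ {x : Matrix (Fin K) (Fin K) ℝ | x.PosSemidef} ψ)
    (hψlip : ∀ x y : Matrix (Fin K) (Fin K) ℝ, x.PosSemidef → y.PosSemidef →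
      |ψ x - ψ y| ≤ L * frob (x - y))
    (hψmono : ∀ a b : Matrix (Fin K) (Fin K) ℝ, a.PosSemidef → b.PosSemidef →
      (a - b).PosSemidef → ψ b ≤ ψ a)
    (H : Matrix (Fin K) (Fin K) ℝ → ℝ) (hH : Continuous H) :
    ∀ x : Matrix (Fin K) (Fin K) ℝ, x.PosSemidef →
      (⨆ z ∈ {z : Matrix (Fin K) (Fin K) ℝ | z.PosSemidef},
        ⨅ y ∈ {y : Matrix (Fin K) (Fin K) ℝ | y.PosSemidef},
          ((((z * (x - y)).trace + ψ y : ℝ) : EReal))) = ((ψ x : ℝ) : EReal) := by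
  intro x hx
  set S : EReal := ⨆ z ∈ {z : Matrix (Fin K) (Fin K) ℝ | z.PosSemidef},
      ⨅ y ∈ {y : Matrix (Fin K) (Fin K) ℝ | y.PosSemidef},
        ((((z * (x - y)).trace + ψ y : ℝ) : EReal)) with hSdef
  have hub : S ≤ ((ψ x : ℝ) : EReal) := by
    rw [hSdef]
    refine iSup₂_le fun z hz => ?_
    refine (iInf₂_le x hx).trans ?_
    apply le_of_eq
    norm_cast
    rw [sub_self, mul_zero, Matrix.trace_zero, zero_add]
  have hlb : ∀ ε : ℝ, 0 < ε → ((ψ x - ε : ℝ) : EReal) ≤ S := by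
    intro ε hε
    obtain ⟨z, hz, hb⟩ := Hopf10.key K ψ L hψconv hψlip hψmono x hx ε hε
    rw [hSdef]
    refine le_iSup₂_of_le z hz ?_
    refine le_iInf₂ fun y hy => ?_
    exact_mod_cast hb y hy
  have hne_top : S ≠ ⊤ := fun h => by
    rw [h] at hub
    exact (EReal.coe_ne_top (ψ x)) (top_le_iff.1 hub)
  have hne_bot : S ≠ ⊥ := fun h => by
    have := hlb 1 one_pos
    rw [h, le_bot_iff] at this
    exact (EReal.coe_ne_bot _) this
  rw [← EReal.coe_toReal hne_top hne_bot] at hub hlb ⊢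
  set r : ℝ := S.toReal
  rw [EReal.coe_le_coe_iff] at hub
  have h1 : ψ x ≤ r := by
    by_contra hcon
    push_neg at hcon
    have := hlb ((ψ x - r) / 2) (by linarith)
    rw [EReal.coe_le_coe_iff] at this
    linarith
  exact congrArg _ (le_antisymm hub h1)
end

section
/- Semigroup property of the Hopf formula: let ψ: S^K_+ → R be convex, Lipschitz, and nondecreasing, and let H: S^K_+ → R be nonnegative and such that for each t ≥ 0 the function ψ* − tH has nondecreasing, convex, lower semicontinuous double conjugate behavior as in the Fenchel–Moreau framework. Then for all s, t ≥ 0: (ψ* − (t+s)H)* = ((ψ* − tH)** − sH)*, where * denotes the Fenchel transform with supremum over S^K_+. Equivalently, the Hopf formula f(t,x) = (ψ* − tH)*(x) satisfies f(t+s,·) = (f(t,·)* − sH)*. -/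
set_option maxHeartbeats 1000000


/-- The Fenchel transform over the positive semidefinite cone. -/
noncomputable def fconj {K : ℕ} (u : Matrix (Fin K) (Fin K) ℝ → EReal)
    (x : Matrix (Fin K) (Fin K) ℝ) : EReal :=
  ⨆ y ∈ {y : Matrix (Fin K) (Fin K) ℝ | y.PosSemidef},
    ((((y * x).trace : ℝ) : EReal) - u y)

/-- The function `ψ* − tH` appearing in the Hopf formula `f(t,·) = (ψ* − tH)*`. -/
noncomputable def hopfAux {K : ℕ} (ψ H : Matrix (Fin K) (Fin K) ℝ → ℝ) (t : ℝ) :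
    Matrix (Fin K) (Fin K) ℝ → EReal :=
  fun z => fconj (fun y => ((ψ y : ℝ) : EReal)) z - ((t * H z : ℝ) : EReal)

/- Auxiliary EReal lemmas -/

theorem esub_sub (e : EReal) (p q : ℝ) : e - ↑p - ↑q = e - ↑(p+q) := by
  induction e using EReal.rec with
  | bot => simp [EReal.bot_sub]
  | coe r => norm_cast; ring_nf
  | top => rw [EReal.top_sub_coe, EReal.top_sub_coe, EReal.top_sub_coe]

theorem esub_flip {a : ℝ} {b c : EReal} (h : (a:EReal) - c ≤ b) : (a:EReal) - b ≤ c := by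
  induction b using EReal.rec with
  | bot =>
    induction c using EReal.rec with
    | bot => simp [EReal.coe_sub_bot] at h
    | coe r => norm_cast at h
    | top => simp
  | coe r =>
    induction c using EReal.rec with
    | bot => simp [EReal.coe_sub_bot] at h
    | coe q => norm_cast at h ⊢; linarith
    | top => simp
  | top => simp [EReal.sub_top]

theorem ene_top_sub (e : EReal) (h : e ≠ ⊤) (c : ℝ) : e - ↑c ≠ ⊤ := by
  induction e using EReal.rec with
  | bot => simp [EReal.bot_sub]
  | coe r => norm_cast; exact EReal.coe_ne_top _
  | top => exact absurd rfl h

theorem ecoe_sub_ne_bot {e : EReal} (h : e ≠ ⊤) (a : ℝ) : (a:EReal) - e ≠ ⊥ := by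
  induction e using EReal.rec with
  | bot => simp [EReal.coe_sub_bot]
  | coe r => norm_cast; exact EReal.coe_ne_bot _
  | top => exact absurd rfl h

/- Auxiliary fconj lemmas -/

theorem f1 {K : ℕ} (u : Matrix (Fin K) (Fin K) ℝ → EReal) (x y : Matrix (Fin K) (Fin K) ℝ)
    (hy : y.PosSemidef) : ((((y * x).trace : ℝ) : EReal) - u y) ≤ fconj u x :=
  le_iSup₂_of_le y hy le_rfl

theorem f2 {K : ℕ} {u : Matrix (Fin K) (Fin K) ℝ → EReal} {x : Matrix (Fin K) (Fin K) ℝ}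
    {M : EReal} (h : ∀ y : Matrix (Fin K) (Fin K) ℝ, y.PosSemidef →
      ((((y * x).trace : ℝ) : EReal) - u y) ≤ M) : fconj u x ≤ M :=
  iSup₂_le h

theorem f3 {K : ℕ} {u v : Matrix (Fin K) (Fin K) ℝ → EReal}
    (h : ∀ y : Matrix (Fin K) (Fin K) ℝ, y.PosSemidef → u y ≤ v y)
    (x : Matrix (Fin K) (Fin K) ℝ) : fconj v x ≤ fconj u x :=
  f2 fun y hy => le_trans (EReal.sub_le_sub le_rfl (h y hy)) (f1 u x y hy)

theorem f4 {K : ℕ} (u : Matrix (Fin K) (Fin K) ℝ → EReal) {x : Matrix (Fin K) (Fin K) ℝ}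
    (hx : x.PosSemidef) : fconj (fconj u) x ≤ u x := by
  apply f2
  intro y hy
  apply esub_flip
  have h := f1 u y x hx
  rwa [Matrix.trace_mul_comm] at h

theorem f5 {K : ℕ} {u : Matrix (Fin K) (Fin K) ℝ → EReal} {x : Matrix (Fin K) (Fin K) ℝ}
    {r : ℝ} (h : (r:EReal) < fconj u x) :
    ∃ y : Matrix (Fin K) (Fin K) ℝ, y.PosSemidef ∧
      (r:EReal) < (((y * x).trace : ℝ) : EReal) - u y := by
  unfold fconj at h
  obtain ⟨y, hy⟩ := lt_iSup_iff.mp h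
  obtain ⟨hyp, h2⟩ := lt_iSup_iff.mp hy
  exact ⟨y, hyp, h2⟩

theorem f6 {K : ℕ} (ψ : Matrix (Fin K) (Fin K) ℝ → ℝ) (w : Matrix (Fin K) (Fin K) ℝ) :
    fconj (fun y => ((ψ y : ℝ) : EReal)) w ≠ ⊥ := by
  intro hb
  have h := f1 (fun y => ((ψ y : ℝ) : EReal)) w 0 Matrix.PosSemidef.zero
  rw [hb, le_bot_iff, Matrix.zero_mul, Matrix.trace_zero] at h
  exact ecoe_sub_ne_bot (EReal.coe_ne_top (ψ 0)) 0 h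

theorem psd_smul {K : ℕ} {A : Matrix (Fin K) (Fin K) ℝ} (hA : A.PosSemidef) {c : ℝ}
    (hc : 0 ≤ c) : (c • A).PosSemidef := by
  constructor
  · have := hA.1
    unfold Matrix.IsHermitian at this ⊢
    rw [Matrix.conjTranspose_smul, this]
    simp
  · intro x
    have h2 := hA.2 x
    convert mul_nonneg hc h2 using 1
    simp only [Finsupp.sum, Finset.mul_sum, Matrix.smul_apply, smul_eq_mul]
    refine Finset.sum_congr rfl fun i _ => Finset.sum_congr rfl fun j _ => ?_
    ring

/-- Semigroup property of the Hopf formula: for `ψ : S^K_+ → ℝ` convex, Lipschitz and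
nondecreasing, and `H ≥ 0` such that for each `t ≥ 0` the double conjugate of
`ψ* − tH` is nondecreasing, convex and lower semicontinuous on the cone (the
Fenchel–Moreau framework), one has, for all `s, t ≥ 0`,
`(ψ* − (t+s)H)* = ((ψ* − tH)** − sH)*` on the positive semidefinite cone. -/
theorem stmt13 (K : ℕ) (ψ H : Matrix (Fin K) (Fin K) ℝ → ℝ)
    (hψconv : ConvexOn ℝ {x : Matrix (Fin K) (Fin K) ℝ | x.PosSemidef} ψ)
    (hψlip : ∃ L : ℝ, ∀ x y : Matrix (Fin K) (Fin K) ℝ, x.PosSemidef → y.PosSemidef →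
      |ψ x - ψ y| ≤ L * frob (x - y))
    (hψmono : ∀ a b : Matrix (Fin K) (Fin K) ℝ, a.PosSemidef → b.PosSemidef →
      (a - b).PosSemidef → ψ b ≤ ψ a)
    (hH : ∀ z : Matrix (Fin K) (Fin K) ℝ, z.PosSemidef → 0 ≤ H z)
    (hFM : ∀ t : ℝ, 0 ≤ t →
      (∀ a b : Matrix (Fin K) (Fin K) ℝ, a.PosSemidef → b.PosSemidef →
        (a - b).PosSemidef →
          fconj (fconj (hopfAux ψ H t)) b ≤ fconj (fconj (hopfAux ψ H t)) a) ∧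
      (∀ x y : Matrix (Fin K) (Fin K) ℝ, x.PosSemidef → y.PosSemidef →
        ∀ a b : ℝ, 0 ≤ a → 0 ≤ b → a + b = 1 →
          fconj (fconj (hopfAux ψ H t)) (a • x + b • y) ≤
            ((a : ℝ) : EReal) * fconj (fconj (hopfAux ψ H t)) x +
              ((b : ℝ) : EReal) * fconj (fconj (hopfAux ψ H t)) y) ∧
      LowerSemicontinuousOn (fconj (fconj (hopfAux ψ H t)))
        {x : Matrix (Fin K) (Fin K) ℝ | x.PosSemidef}) :
    ∀ s t : ℝ, 0 ≤ s → 0 ≤ t → ∀ x : Matrix (Fin K) (Fin K) ℝ, x.PosSemidef →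
      fconj (hopfAux ψ H (t + s)) x =
        fconj (fun z => fconj (fconj (hopfAux ψ H t)) z - ((s * H z : ℝ) : EReal)) x := by
  intro s t hs ht x hx
  have hψ0 : fconj (fun y => ((ψ y : ℝ) : EReal)) 0 ≤ ((-ψ 0 : ℝ) : EReal) := by
    apply f2
    intro z hz
    have h1 : ψ 0 ≤ ψ z := hψmono z 0 hz Matrix.PosSemidef.zero (by rwa [sub_zero])
    rw [Matrix.mul_zero, Matrix.trace_zero]
    norm_cast
    linarith
  have hψ0top : fconj (fun y => ((ψ y : ℝ) : EReal)) 0 ≠ ⊤ :=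
    fun h => (EReal.coe_lt_top (-ψ 0)).not_ge (h ▸ hψ0)
  apply le_antisymm
  · -- easy direction
    apply f3
    intro z hz
    have h1 : fconj (fconj (hopfAux ψ H t)) z ≤ hopfAux ψ H t z := f4 _ hz
    calc fconj (fconj (hopfAux ψ H t)) z - ((s * H z : ℝ) : EReal)
        ≤ hopfAux ψ H t z - ((s * H z : ℝ) : EReal) := EReal.sub_le_sub h1 le_rfl
      _ = hopfAux ψ H (t + s) z := by
          simp only [hopfAux]
          rw [esub_sub]
          have : t * H z + s * H z = (t + s) * H z := by ring
          rw [this]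
  · -- hard direction
    apply f2
    intro y hy
    by_cases hM : fconj (hopfAux ψ H (t + s)) x = ⊤
    · rw [hM]; exact le_top
    rcases eq_or_lt_of_le hs with hs0 | hsp
    · -- s = 0
      subst hs0
      simp only [add_zero, zero_mul, EReal.coe_zero, sub_zero]
      apply esub_flip
      have h := f1 (fconj (hopfAux ψ H t)) y x hx
      rwa [Matrix.trace_mul_comm] at h
    · -- s > 0
      have hts : 0 < t + s := by linarith
      set lam := s / (t + s) with hlamdef
      set mu := t / (t + s) with hmudef
      have hlamp : 0 < lam := div_pos hsp hts
      have hmup : 0 ≤ mu := div_nonneg ht hts.le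
      have hone : lam + mu = 1 := by rw [hlamdef, hmudef]; field_simp; ring
      have hlams : lam * (t + s) = s := by rw [hlamdef]; field_simp
      have hmut : mu * (t + s) = t := by rw [hmudef]; field_simp
      -- M is finite
      have hM0 : fconj (hopfAux ψ H (t + s)) x ≠ ⊥ := by
        have hA0top : hopfAux ψ H (t + s) 0 ≠ ⊤ := by
          simp only [hopfAux]
          exact ene_top_sub _ hψ0top _
        have hge := f1 (hopfAux ψ H (t + s)) x 0 Matrix.PosSemidef.zero
        rw [Matrix.zero_mul, Matrix.trace_zero] at hge
        intro hbot
        rw [hbot, le_bot_iff] at hge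
        exact ecoe_sub_ne_bot hA0top 0 hge
      obtain ⟨m, hm⟩ : ∃ m : ℝ, fconj (hopfAux ψ H (t + s)) x = (m : EReal) :=
        ⟨_, (EReal.coe_toReal hM hM0).symm⟩
      -- Step A1 : conjugate bound at convex combinations
      have stepA1 : ∀ a : Matrix (Fin K) (Fin K) ℝ, a.PosSemidef →
          fconj (hopfAux ψ H t) (lam • a + mu • x) ≤ ((lam * ψ a + mu * m : ℝ) : EReal) := by
        intro a ha
        apply f2
        intro w hw
        simp only [hopfAux]
        rcases eq_or_ne (fconj (fun y => ((ψ y : ℝ) : EReal)) w) ⊤ with hpt | hpt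
        · rw [hpt, EReal.top_sub_coe, EReal.sub_top]; exact bot_le
        · obtain ⟨p, hp⟩ : ∃ p : ℝ, fconj (fun y => ((ψ y : ℝ) : EReal)) w = (p : EReal) :=
            ⟨_, (EReal.coe_toReal hpt (f6 ψ w)).symm⟩
          have hp1 : (a * w).trace - ψ a ≤ p := by
            have h := f1 (fun y => ((ψ y : ℝ) : EReal)) w a ha
            rw [hp] at h
            exact_mod_cast h
          have hp2 : (w * x).trace - (p - (t + s) * H w) ≤ m := by
            have h := f1 (hopfAux ψ H (t + s)) x w hw
            rw [hm] at h
            have hA : hopfAux ψ H (t + s) w = ((p - (t + s) * H w : ℝ) : EReal) := by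
              simp only [hopfAux]
              rw [hp]
              norm_cast
            rw [hA] at h
            exact_mod_cast h
          have htr : (w * (lam • a + mu • x)).trace
              = lam * (w * a).trace + mu * (w * x).trace := by
            rw [Matrix.mul_add, Matrix.mul_smul, Matrix.mul_smul, Matrix.trace_add,
              Matrix.trace_smul, Matrix.trace_smul]
            simp [smul_eq_mul]
          have hcm : (w * a).trace = (a * w).trace := Matrix.trace_mul_comm w a
          rw [hp]
          have hc1 : ((p : EReal) - ((t * H w : ℝ) : EReal)) = ((p - t * H w : ℝ) : EReal) := by
            norm_cast
          rw [hc1, ← EReal.coe_sub, EReal.coe_le_coe_iff]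
          have e1 : lam * ((a * w).trace - p) ≤ lam * ψ a :=
            mul_le_mul_of_nonneg_left (by linarith) hlamp.le
          have e2 : mu * ((w * x).trace - p + (t + s) * H w) ≤ mu * m :=
            mul_le_mul_of_nonneg_left (by linarith) hmup
          have hpe : lam * p + mu * p = p := by rw [← add_mul, hone, one_mul]
          have hte : t * H w = mu * ((t + s) * H w) := by rw [← mul_assoc, hmut]
          rw [htr, hcm, hte]
          linarith [e1, e2, hpe]
      -- lower bound for the double conjugate T
      have hT : ∀ a : Matrix (Fin K) (Fin K) ℝ, a.PosSemidef →
          ((lam * (a * y).trace + mu * (x * y).trace - lam * ψ a - mu * m : ℝ) : EReal) ≤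
            fconj (fconj (hopfAux ψ H t)) y := by
        intro a ha
        have hz : (lam • a + mu • x).PosSemidef :=
          Matrix.PosSemidef.add (psd_smul ha hlamp.le) (psd_smul hx hmup)
        have h := f1 (fconj (hopfAux ψ H t)) y (lam • a + mu • x) hz
        refine le_trans ?_ h
        have htr2 : ((lam • a + mu • x) * y).trace
            = lam * (a * y).trace + mu * (x * y).trace := by
          rw [Matrix.add_mul, Matrix.smul_mul, Matrix.smul_mul, Matrix.trace_add,
            Matrix.trace_smul, Matrix.trace_smul]
          simp [smul_eq_mul]
        have hre : (lam * (a * y).trace + mu * (x * y).trace - lam * ψ a - mu * m : ℝ)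
            = (((lam • a + mu • x) * y).trace : ℝ) - (lam * ψ a + mu * m) := by
          rw [htr2]; ring
        rw [hre, EReal.coe_sub]
        exact EReal.sub_le_sub le_rfl (stepA1 a ha)
      rw [hm]
      rcases eq_or_ne (fconj (fconj (hopfAux ψ H t)) y) ⊤ with hTt | hTt
      · rw [hTt, EReal.top_sub_coe, EReal.sub_top]; exact bot_le
      have hTb : fconj (fconj (hopfAux ψ H t)) y ≠ ⊥ := by
        intro hb
        have h := hT 0 Matrix.PosSemidef.zero
        rw [hb, le_bot_iff] at h
        exact EReal.coe_ne_bot _ h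
      obtain ⟨τ, hτe⟩ : ∃ τ : ℝ, fconj (fconj (hopfAux ψ H t)) y = (τ : EReal) :=
        ⟨_, (EReal.coe_toReal hTt hTb).symm⟩
      have hτ : ∀ a : Matrix (Fin K) (Fin K) ℝ, a.PosSemidef →
          lam * (a * y).trace + mu * (x * y).trace - lam * ψ a - mu * m ≤ τ := by
        intro a ha
        have h := hT a ha
        rw [hτe] at h
        exact_mod_cast h
      rw [hτe]
      have hc2 : ((τ : EReal) - ((s * H y : ℝ) : EReal)) = ((τ - s * H y : ℝ) : EReal) := by
        norm_cast
      rw [hc2, ← EReal.coe_sub, EReal.coe_le_coe_iff]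
      -- real goal : (y*x).trace - (τ - s * H y) ≤ m
      rcases eq_or_ne (fconj (fun y => ((ψ y : ℝ) : EReal)) y) ⊤ with hq | hq
      · -- ψ* y = ⊤ : contradiction with τ finite
        exfalso
        set c := τ - mu * (x * y).trace + mu * m with hcdef
        have hlt : ((c / lam + 1 : ℝ) : EReal) < fconj (fun y => ((ψ y : ℝ) : EReal)) y := by
          rw [hq]; exact EReal.coe_lt_top _
        obtain ⟨a, ha, hlt2⟩ := f5 hlt
        rw [← EReal.coe_sub, EReal.coe_lt_coe_iff] at hlt2
        have h8 := hτ a ha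
        have h9 : lam * (c / lam + 1) ≤ lam * ((a * y).trace - ψ a) :=
          mul_le_mul_of_nonneg_left hlt2.le hlamp.le
        have h10 : lam * (c / lam + 1) = c + lam := by field_simp
        linarith [h8, h9, h10]
      · -- ψ* y finite
        obtain ⟨q, hqe⟩ : ∃ q : ℝ, fconj (fun y => ((ψ y : ℝ) : EReal)) y = (q : EReal) :=
          ⟨_, (EReal.coe_toReal hq (f6 ψ y)).symm⟩
        have hq2 : (y * x).trace - (q - (t + s) * H y) ≤ m := by
          have h := f1 (hopfAux ψ H (t + s)) x y hy
          rw [hm] at h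
          have hA : hopfAux ψ H (t + s) y = ((q - (t + s) * H y : ℝ) : EReal) := by
            simp only [hopfAux]
            rw [hqe]
            norm_cast
          rw [hA] at h
          exact_mod_cast h
        by_contra hcon
        push_neg at hcon
        set ε := (y * x).trace - (τ - s * H y) - m with hεdef
        have hε : 0 < ε := by rw [hεdef]; linarith
        set δ := ε / (2 * lam) with hδdef
        have hδpos : 0 < δ := div_pos hε (by linarith)
        have hδeq : lam * δ = ε / 2 := by
          rw [hδdef]; field_simp
        have hlt : ((q - δ : ℝ) : EReal) < fconj (fun y => ((ψ y : ℝ) : EReal)) y := by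
          rw [hqe]
          exact_mod_cast (by linarith : q - δ < q)
        obtain ⟨a, ha, hlt2⟩ := f5 hlt
        rw [← EReal.coe_sub, EReal.coe_lt_coe_iff] at hlt2
        have h8 := hτ a ha
        have ha1 : lam * (q - δ) ≤ lam * ((a * y).trace - ψ a) :=
          mul_le_mul_of_nonneg_left hlt2.le hlamp.le
        have ha2 : lam * ((y * x).trace + (t + s) * H y - m) ≤ lam * q :=
          mul_le_mul_of_nonneg_left (by linarith) hlamp.le
        have e3 : lam * ((t + s) * H y) = s * H y := by rw [← mul_assoc, hlams]
        have e4 : lam * (y * x).trace + mu * (y * x).trace = (y * x).trace := by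
          rw [← add_mul, hone, one_mul]
        have e5 : lam * m + mu * m = m := by rw [← add_mul, hone, one_mul]
        have e6 : (x * y).trace = (y * x).trace := Matrix.trace_mul_comm x y
        rw [e6] at h8
        linarith [h8, ha1, ha2, e3, e4, e5, hδeq]
end
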